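/- Let H_ω be a covariant ergodic family of self-adjoint operators on ℓ²(ℤ^D) with density of states measure N. If λ ∈ ℝ is a growth point of N (i.e. N((λ-ε, λ+ε)) > 0 for every ε > 0), then λ ∈ spec(H_ω) for P-almost every ω; if λ is not a growth point of N, then λ ∉ spec(H_ω) for P-almost every ω. -/

import Mathlib

open MeasureTheory
noncomputable section

/-- The lattice `ℤ^D`. -/
abbrev ZLat (D : ℕ) := Fin D → ℤ

instance : Fact ((1 : ENNReal) ≤ 2) := ⟨one_le_two⟩

/-- The Hilbert space `ℓ²(ℤ^D)`. -/
abbrev L2 (D : ℕ) := lp (fun _ : ZLat D => ℂ) 2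

/-- The standard basis vector `δ_n` of `ℓ²(ℤ^D)`. -/
def delta (D : ℕ) (n : ZLat D) : L2 D := lp.single 2 n 1

set_option synthInstance.maxHeartbeats 400000

lemma op_eq_zero_of_delta (D : ℕ) (A : L2 D →L[ℂ] L2 D)
    (h : ∀ n, A (delta D n) = 0) : A = 0 := by
  refine ContinuousLinearMap.ext fun f => ?_
  have hs : HasSum (fun i : ZLat D => lp.single 2 i (f i : ℂ)) f :=
    lp.hasSum_single (by norm_num) f
  have hs2 : HasSum (fun i : ZLat D => A (lp.single 2 i (f i : ℂ))) (A f) :=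
    hs.mapL A
  have hz : ∀ i : ZLat D, A (lp.single 2 i (f i : ℂ)) = 0 := by
    intro i
    have : lp.single (E := fun _ : ZLat D => ℂ) 2 i (f i : ℂ)
        = (f i) • lp.single 2 i (1 : ℂ) := by
      rw [← lp.single_smul]; norm_num
    rw [this, _root_.map_smul, show A (lp.single 2 i 1) = 0 from h i, smul_zero]
  simp only [hz] at hs2
  simpa using hs2.unique hasSum_zero

/-- Pastur: let `ω ↦ H_ω` be a covariant ergodic family of bounded
self-adjoint operators on `ℓ²(ℤ^D)`, with spectral projections `E_ω(Δ)` (vanishing on an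
open set `Δ` iff the spectrum avoids `Δ`) and density of states measure
`N(Δ) = ∫ ⟨0|E_ω(Δ)|0⟩ dP(ω)`.  If `λ` is a growth point of `N` then
`λ ∈ spec(H_ω)` for `P`-a.e. `ω`; if `λ` is not a growth point of `N` then
`λ ∉ spec(H_ω)` for `P`-a.e. `ω`. -/
theorem dos_growth_point_iff_in_spectrum
    (D : ℕ) {Ω : Type*} [MeasurableSpace Ω]
    (P : Measure Ω) [IsProbabilityMeasure P]
    (T : ZLat D → Ω → Ω)
    (hT0 : T 0 = id)
    (hTadd : ∀ a b : ZLat D, T (a + b) = T a ∘ T b)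
    (hmp : ∀ a : ZLat D, MeasurePreserving (T a) P P)
    (herg : ∀ s : Set Ω, MeasurableSet s → (∀ a : ZLat D, T a ⁻¹' s = s) →
      P s = 0 ∨ P s = 1)
    (Hf : Ω → (L2 D →L[ℂ] L2 D))
    (hsa : ∀ ω, star (Hf ω) = Hf ω)
    (E : Ω → Set ℝ → (L2 D →L[ℂ] L2 D))
    (hEproj : ∀ ω Δ, E ω Δ * E ω Δ = E ω Δ ∧ star (E ω Δ) = E ω Δ)
    (hEspec : ∀ (ω : Ω) (Δ : Set ℝ), IsOpen Δ →
      (E ω Δ = 0 ↔ spectrum ℂ (Hf ω) ∩ (Complex.ofReal '' Δ) = ∅))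
    (hEcov : ∀ (a : ZLat D) (ω : Ω) (Δ : Set ℝ) (n : ZLat D),
      ‖E (T a ω) Δ (delta D (n + a))‖ = ‖E ω Δ (delta D n)‖)
    (hEmeas : ∀ Δ : Set ℝ, MeasurableSet Δ →
      Measurable fun ω => ‖E ω Δ (delta D 0)‖)
    (hspecmeas : ∀ lam : ℝ, MeasurableSet {ω : Ω | (lam : ℂ) ∈ spectrum ℂ (Hf ω)})
    (N : Measure ℝ)
    (hN : ∀ Δ : Set ℝ, MeasurableSet Δ →
      N Δ = ∫⁻ ω, ((‖E ω Δ (delta D 0)‖₊ : ENNReal) ^ 2) ∂P)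
    (lam : ℝ) :
    ((∀ ε : ℝ, 0 < ε → 0 < N (Set.Ioo (lam - ε) (lam + ε))) →
        ∀ᵐ ω ∂P, (lam : ℂ) ∈ spectrum ℂ (Hf ω)) ∧
    ((¬ ∀ ε : ℝ, 0 < ε → 0 < N (Set.Ioo (lam - ε) (lam + ε))) →
        ∀ᵐ ω ∂P, (lam : ℂ) ∉ spectrum ℂ (Hf ω)) := by
  -- basic facts about the translations
  have hTinv : ∀ a : ZLat D, ∀ ω : Ω, T a (T (-a) ω) = ω := by
    intro a ω
    have : T a ∘ T (-a) = id := by rw [← hTadd, add_neg_cancel, hT0]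
    exact congrFun this ω
  -- covariance reformulated: ‖E ω Δ (δ m)‖ = ‖E (T (-m) ω) Δ (δ 0)‖
  have hcov0 : ∀ (ω : Ω) (Δ : Set ℝ) (m : ZLat D),
      ‖E ω Δ (delta D m)‖ = ‖E (T (-m) ω) Δ (delta D 0)‖ := by
    intro ω Δ m
    have := hEcov m (T (-m) ω) Δ 0
    rwa [hTinv m ω, zero_add] at this
  -- measurability of ω ↦ ‖E ω Δ (δ m)‖ for measurable Δ
  have hmeas' : ∀ (Δ : Set ℝ), MeasurableSet Δ → ∀ m : ZLat D,
      Measurable fun ω => ‖E ω Δ (delta D m)‖ := by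
    intro Δ hΔ m
    have : (fun ω => ‖E ω Δ (delta D m)‖)
        = (fun ω => ‖E ω Δ (delta D 0)‖) ∘ T (-m) := by
      funext ω; exact hcov0 ω Δ m
    rw [this]
    exact (hEmeas Δ hΔ).comp (hmp (-m)).measurable
  -- for ε > 0 define the event that the spectrum avoids (lam-ε, lam+ε)
  set Δ : ℝ → Set ℝ := fun ε => Set.Ioo (lam - ε) (lam + ε) with hΔdef
  have hΔmeas : ∀ ε : ℝ, MeasurableSet (Δ ε) := fun ε => measurableSet_Ioo
  have hΔopen : ∀ ε : ℝ, IsOpen (Δ ε) := fun ε => isOpen_Ioo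
  -- E ω (Δ ε) = 0 ↔ all matrix elements vanish
  have hEzero_iff : ∀ (ω : Ω) (ε : ℝ),
      E ω (Δ ε) = 0 ↔ ∀ m : ZLat D, ‖E ω (Δ ε) (delta D m)‖ = 0 := by
    intro ω ε
    constructor
    · intro h m; rw [h]; simp
    · intro h
      exact op_eq_zero_of_delta D _ fun m => norm_eq_zero.mp (h m)
  -- if N (Δ ε) = 0 then a.e. E ω (Δ ε) = 0
  have hNzero_ae : ∀ ε : ℝ, N (Δ ε) = 0 → ∀ᵐ ω ∂P, E ω (Δ ε) = 0 := by
    intro ε hNe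
    rw [hN (Δ ε) (hΔmeas ε)] at hNe
    have hm : Measurable fun ω => ((‖E ω (Δ ε) (delta D 0)‖₊ : ENNReal) ^ 2) := by
      have h1 : Measurable fun ω => ENNReal.ofReal ‖E ω (Δ ε) (delta D 0)‖ :=
        ENNReal.measurable_ofReal.comp (hEmeas (Δ ε) (hΔmeas ε))
      have := h1.pow_const 2
      convert this using 2 with ω
      rw [ofReal_norm, enorm_eq_nnnorm]
    have h0 : ∀ᵐ ω ∂P, ((‖E ω (Δ ε) (delta D 0)‖₊ : ENNReal) ^ 2) = 0 :=
      (lintegral_eq_zero_iff hm).mp hNe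
    have h0' : ∀ᵐ ω ∂P, ‖E ω (Δ ε) (delta D 0)‖ = 0 := by
      filter_upwards [h0] with ω hω
      have : (‖E ω (Δ ε) (delta D 0)‖₊ : ENNReal) = 0 := by
        have := pow_eq_zero_iff (n := 2) (by norm_num) |>.mp hω
        exact this
      simpa using this
    -- transfer to all m using measure preservation
    have hall : ∀ m : ZLat D, ∀ᵐ ω ∂P, ‖E ω (Δ ε) (delta D m)‖ = 0 := by
      intro m
      have hset : MeasurableSet {ω : Ω | ¬ ‖E ω (Δ ε) (delta D 0)‖ = 0} :=
        ((hEmeas (Δ ε) (hΔmeas ε)) (measurableSet_singleton 0)).compl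
      have hP0 : P {ω : Ω | ¬ ‖E ω (Δ ε) (delta D 0)‖ = 0} = 0 :=
        ae_iff.mp h0'
      have : P (T (-m) ⁻¹' {ω : Ω | ¬ ‖E ω (Δ ε) (delta D 0)‖ = 0}) = 0 := by
        rw [(hmp (-m)).measure_preimage hset.nullMeasurableSet, hP0]
      have hsub : {ω : Ω | ¬ ‖E ω (Δ ε) (delta D m)‖ = 0}
          ⊆ T (-m) ⁻¹' {ω : Ω | ¬ ‖E ω (Δ ε) (delta D 0)‖ = 0} := by
        intro ω hω
        simp only [Set.mem_setOf_eq, Set.mem_preimage] at hω ⊢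
        rwa [← hcov0 ω (Δ ε) m]
      exact measure_mono_null hsub this
    have : ∀ᵐ ω ∂P, ∀ m : ZLat D, ‖E ω (Δ ε) (delta D m)‖ = 0 :=
      ae_all_iff.mpr hall
    filter_upwards [this] with ω hω
    exact (hEzero_iff ω ε).mpr hω
  -- the event {E ω (Δ ε) = 0} is invariant and measurable
  have hS_inv : ∀ (ε : ℝ) (b : ZLat D),
      T b ⁻¹' {ω : Ω | E ω (Δ ε) = 0} = {ω : Ω | E ω (Δ ε) = 0} := by
    intro ε b
    ext ω
    simp only [Set.mem_preimage, Set.mem_setOf_eq, hEzero_iff]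
    constructor
    · intro h m
      rw [← hEcov b ω (Δ ε) m]
      exact h (m + b)
    · intro h m
      have : m = (m - b) + b := by ring
      rw [this, hEcov b ω (Δ ε) (m - b)]
      exact h (m - b)
  have hS_meas : ∀ ε : ℝ, MeasurableSet {ω : Ω | E ω (Δ ε) = 0} := by
    intro ε
    have : {ω : Ω | E ω (Δ ε) = 0}
        = ⋂ m : ZLat D, (fun ω => ‖E ω (Δ ε) (delta D m)‖) ⁻¹' {0} := by
      ext ω
      simp only [Set.mem_setOf_eq, Set.mem_iInter, Set.mem_preimage,
        Set.mem_singleton_iff, hEzero_iff]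
    rw [this]
    exact MeasurableSet.iInter fun m =>
      (hmeas' (Δ ε) (hΔmeas ε) m) (measurableSet_singleton 0)
  constructor
  · -- growth point ⇒ a.e. in spectrum
    intro hgrowth
    have hk : ∀ k : ℕ, ∀ᵐ ω ∂P,
        (spectrum ℂ (Hf ω) ∩ (Complex.ofReal '' Δ (1 / ((k : ℝ) + 1)))).Nonempty := by
      intro k
      set ε : ℝ := 1 / ((k : ℝ) + 1) with hεdef
      have hε : 0 < ε := by positivity
      rcases herg _ (hS_meas ε) (hS_inv ε) with h0 | h1
      · -- P S = 0: a.e. E ω (Δ ε) ≠ 0, hence spectrum meets Δ ε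
        have : ∀ᵐ ω ∂P, E ω (Δ ε) ≠ 0 := by
          rw [ae_iff]
          simpa using h0
        filter_upwards [this] with ω hω
        rw [Set.nonempty_iff_ne_empty]
        intro hemp
        exact hω ((hEspec ω (Δ ε) (hΔopen ε)).mpr hemp)
      · -- P S = 1 contradicts the growth-point hypothesis
        exfalso
        have hc : P {ω : Ω | E ω (Δ ε) = 0}ᶜ = 0 := by
          rw [measure_compl (hS_meas ε) (measure_ne_top P _), h1]
          simp
        have hae : ∀ᵐ ω ∂P, E ω (Δ ε) = 0 := by
          rw [ae_iff]
          simpa [Set.compl_setOf] using hc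
        have : N (Δ ε) = 0 := by
          rw [hN (Δ ε) (hΔmeas ε)]
          rw [lintegral_eq_zero_iff']
          · filter_upwards [hae] with ω hω
            rw [hω]
            simp
          · have h2 : Measurable fun ω => ENNReal.ofReal ‖E ω (Δ ε) (delta D 0)‖ :=
              ENNReal.measurable_ofReal.comp (hEmeas (Δ ε) (hΔmeas ε))
            have h3 := h2.pow_const 2
            have h4 : Measurable fun ω => ((‖E ω (Δ ε) (delta D 0)‖₊ : ENNReal) ^ 2) := by
              convert h3 using 2 with ω
              rw [ofReal_norm, enorm_eq_nnnorm]
            exact h4.aemeasurable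
        exact absurd this (hgrowth ε hε).ne'
    have hall := ae_all_iff.mpr hk
    filter_upwards [hall] with ω hω
    have hcl : IsClosed (spectrum ℂ (Hf ω)) := spectrum.isClosed (Hf ω)
    rw [← hcl.closure_eq]
    rw [Metric.mem_closure_iff]
    intro δ hδ
    obtain ⟨k, hkδ⟩ := exists_nat_one_div_lt hδ
    obtain ⟨x, hxspec, t, htΔ, rfl⟩ := hω k
    refine ⟨(t : ℂ), hxspec, ?_⟩
    have : dist ((lam : ℝ) : ℂ) ((t : ℝ) : ℂ) = |lam - t| := by
      rw [Complex.dist_eq]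
      rw [show ((lam : ℝ) : ℂ) - ((t : ℝ) : ℂ) = (((lam - t : ℝ)) : ℂ) by push_cast; ring]
      exact (Complex.norm_real _).trans (Real.norm_eq_abs _)
    rw [this]
    have h1 : lam - 1 / ((k : ℝ) + 1) < t := htΔ.1
    have h2 : t < lam + 1 / ((k : ℝ) + 1) := htΔ.2
    rw [abs_sub_lt_iff]
    constructor <;> linarith
  · -- not a growth point ⇒ a.e. not in spectrum
    intro hng
    push_neg at hng
    obtain ⟨ε, hε, hNε⟩ := hng
    have hN0 : N (Δ ε) = 0 := by
      simpa using hNε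
    filter_upwards [hNzero_ae ε hN0] with ω hω hmem
    have hemp := (hEspec ω (Δ ε) (hΔopen ε)).mp hω
    have hlam : ((lam : ℝ) : ℂ) ∈ spectrum ℂ (Hf ω) ∩ (Complex.ofReal '' Δ ε) :=
      ⟨hmem, ⟨lam, ⟨by linarith, by linarith⟩, rfl⟩⟩
    rw [hemp] at hlam
    exact hlam
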